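/- Let μ ∈ ℝ, let A : ℝ → ℝ be smooth, let 𝔄 : ℝ → ℝ be smooth with 𝔄′ = A, and set f(x) = (x−1)^{μ−3/2}(x+1)^{−μ−3/2}, h(x) = (x−1)^{μ−1/2}(x+1)^{−μ−1/2} on the interval (1,∞). Then for every smooth solution u : ℝ × (1,∞) → ℝ of the equation f(x)u_t = (A(u)u_x)_x + h(x)u_x (the case B = 1), both pairs F₁ = f(x)e^{(2μ+1)t}(x−1)u, G₁ = −e^{(2μ+1)t}(x−1)(A(u)u_x + h(x)u) + e^{(2μ+1)t}𝔄(u) and F₂ = f(x)e^{(2μ−1)t}(x+1)u, G₂ = −e^{(2μ−1)t}(x+1)(A(u)u_x + h(x)u) + e^{(2μ−1)t}𝔄(u) satisfy the conservation-law identity ∂_t F + ∂_x G = 0 at every point of ℝ × (1,∞). -/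

import Mathlib

open Set Real
open scoped ContDiff

/-- For the equation `f(x) u_t = (A(u) u_x)_x + h(x) u_x` on `(1,∞)` with
`f(x) = (x-1)^{μ-3/2} (x+1)^{-μ-3/2}`, `h(x) = (x-1)^{μ-1/2} (x+1)^{-μ-1/2}` (the case
`B = 1`), both pairs
`F₁ = f(x) e^{(2μ+1)t} (x-1) u`, `G₁ = -e^{(2μ+1)t}(x-1)(A(u) u_x + h(x) u) + e^{(2μ+1)t} 𝔄(u)`
and
`F₂ = f(x) e^{(2μ-1)t} (x+1) u`, `G₂ = -e^{(2μ-1)t}(x+1)(A(u) u_x + h(x) u) + e^{(2μ-1)t} 𝔄(u)`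
(where `𝔄' = A`) are conserved vectors. -/
theorem conservation_laws_case_B_one_f_powers_xm1_xp1
    (μ : ℝ) (A FA : ℝ → ℝ) (hA : ContDiff ℝ ∞ A)
    (hFA : ContDiff ℝ ∞ FA) (hFA' : ∀ v : ℝ, HasDerivAt FA (A v) v)
    (f h : ℝ → ℝ)
    (hfdef : ∀ x ∈ Ioi (1:ℝ), f x = (x - 1) ^ (μ - 3/2) * (x + 1) ^ (-μ - 3/2))
    (hhdef : ∀ x ∈ Ioi (1:ℝ), h x = (x - 1) ^ (μ - 1/2) * (x + 1) ^ (-μ - 1/2))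
    (u : ℝ → ℝ → ℝ)
    (hu : ContDiffOn ℝ ∞ (fun p : ℝ × ℝ => u p.1 p.2) (univ ×ˢ Ioi 1))
    (hpde : ∀ t : ℝ, ∀ x ∈ Ioi (1:ℝ),
      f x * deriv (fun s => u s x) t
        = deriv (fun y => A (u t y) * deriv (fun z => u t z) y) x
          + h x * deriv (fun y => u t y) x) :
    ∀ t : ℝ, ∀ x ∈ Ioi (1:ℝ),
      (deriv (fun s => f x * Real.exp ((2*μ + 1) * s) * (x - 1) * u s x) t
        + deriv (fun y =>
            -(Real.exp ((2*μ + 1) * t) * (y - 1)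
                * (A (u t y) * deriv (fun z => u t z) y + h y * u t y))
              + Real.exp ((2*μ + 1) * t) * FA (u t y)) x = 0)
      ∧ (deriv (fun s => f x * Real.exp ((2*μ - 1) * s) * (x + 1) * u s x) t
        + deriv (fun y =>
            -(Real.exp ((2*μ - 1) * t) * (y + 1)
                * (A (u t y) * deriv (fun z => u t z) y + h y * u t y))
              + Real.exp ((2*μ - 1) * t) * FA (u t y)) x = 0) := by
  intro t x hx
  have hx' : (1:ℝ) < x := hx
  have hx1 : (0:ℝ) < x - 1 := by linarith
  have hx2 : (0:ℝ) < x + 1 := by linarith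
  -- smoothness of u in x at fixed t
  have hg : ContDiffOn ℝ ∞ (fun y => u t y) (Ioi 1) := by
    have hc : ContDiff ℝ ∞ (fun y : ℝ => ((t, y) : ℝ × ℝ)) := contDiff_const.prodMk contDiff_id
    exact hu.comp hc.contDiffOn (fun y hy => ⟨mem_univ _, hy⟩)
  have hgx : ContDiffAt ℝ ∞ (fun y => u t y) x := hg.contDiffAt (isOpen_Ioi.mem_nhds hx)
  have hg' : HasDerivAt (fun z => u t z) (deriv (fun z => u t z) x) x :=
    (hgx.differentiableAt (by norm_num)).hasDerivAt
  have hdg : ContDiffOn ℝ ∞ (deriv (fun z => u t z)) (Ioi 1) :=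
    hg.deriv_of_isOpen isOpen_Ioi (by simp)
  have hg'' : HasDerivAt (deriv (fun z => u t z)) (deriv (deriv (fun z => u t z)) x) x :=
    (((hdg.contDiffAt (isOpen_Ioi.mem_nhds hx))).differentiableAt (by norm_num)).hasDerivAt
  have hAg : HasDerivAt (fun y => A (u t y)) (deriv A (u t x) * deriv (fun z => u t z) x) x := by
    have hA' : HasDerivAt A (deriv A (u t x)) (u t x) :=
      ((hA.differentiable (by norm_num)) (u t x)).hasDerivAt
    exact hA'.comp x hg'
  have hFAg : HasDerivAt (fun y => FA (u t y)) (A (u t x) * deriv (fun z => u t z) x) x :=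
    (hFA' (u t x)).comp x hg'
  -- derivative of h
  have hhd : HasDerivAt h (f x * (2*μ - x)) x := by
    have h1 : HasDerivAt (fun y : ℝ => (y - 1) ^ (μ - 1/2))
        ((μ - 1/2) * (x - 1) ^ (μ - 1/2 - 1) * 1) x := by
      have hb : HasDerivAt (fun y : ℝ => y - 1) 1 x := (hasDerivAt_id x).sub_const 1
      exact (Real.hasDerivAt_rpow_const (Or.inl hx1.ne')).comp x hb
    have h2 : HasDerivAt (fun y : ℝ => (y + 1) ^ (-μ - 1/2))
        ((-μ - 1/2) * (x + 1) ^ (-μ - 1/2 - 1) * 1) x := by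
      have hb : HasDerivAt (fun y : ℝ => y + 1) 1 x := (hasDerivAt_id x).add_const 1
      exact (Real.hasDerivAt_rpow_const (Or.inl hx2.ne')).comp x hb
    have hH := h1.mul h2
    have heq : h =ᶠ[nhds x] fun y : ℝ => (y - 1) ^ (μ - 1/2) * (y + 1) ^ (-μ - 1/2) :=
      Filter.eventuallyEq_of_mem (isOpen_Ioi.mem_nhds hx) (fun y hy => hhdef y hy)
    have hH' := hH.congr_of_eventuallyEq heq
    refine hH'.congr_deriv ?_
    rw [hfdef x hx]
    rw [show μ - 1/2 - 1 = μ - 3/2 by ring, show -μ - 1/2 - 1 = -μ - 3/2 by ring,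
      show μ - 1/2 = (μ - 3/2) + 1 by ring, show -μ - 1/2 = (-μ - 3/2) + 1 by ring,
      Real.rpow_add_one hx1.ne', Real.rpow_add_one hx2.ne']
    ring
  have hhx : h x = f x * ((x - 1) * (x + 1)) := by
    rw [hhdef x hx, hfdef x hx,
      show μ - 1/2 = (μ - 3/2) + 1 by ring, show -μ - 1/2 = (-μ - 3/2) + 1 by ring,
      Real.rpow_add_one hx1.ne', Real.rpow_add_one hx2.ne']
    ring
  -- smoothness of u in t at fixed x
  have hts : ContDiff ℝ ∞ (fun s => u s x) := by
    rw [← contDiffOn_univ]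
    exact hu.comp (contDiff_id.prodMk contDiff_const).contDiffOn (fun s _ => ⟨mem_univ _, hx⟩)
  have hdt : HasDerivAt (fun s => u s x) (deriv (fun s => u s x) t) t :=
    ((hts.differentiable (by norm_num)) t).hasDerivAt
  -- PDE rearranged
  have hq : deriv (fun y => A (u t y) * deriv (fun z => u t z) y) x
      = deriv A (u t x) * deriv (fun z => u t z) x * deriv (fun z => u t z) x
        + A (u t x) * deriv (deriv (fun z => u t z)) x := (hAg.mul hg'').deriv
  have hpde' := hpde t x hx
  rw [hq] at hpde'
  -- main computation, uniform in c and lam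
  have main : ∀ c lam : ℝ,
      lam * f x * (x - c) = (x - c) * (f x * (2*μ - x)) + h x →
      deriv (fun s => f x * Real.exp (lam * s) * (x - c) * u s x) t
        + deriv (fun y =>
            -(Real.exp (lam * t) * (y - c)
                * (A (u t y) * deriv (fun z => u t z) y + h y * u t y))
              + Real.exp (lam * t) * FA (u t y)) x = 0 := by
    intro c lam hkey
    have hFt : HasDerivAt (fun s => f x * Real.exp (lam * s) * (x - c) * u s x)
        ((f x * (Real.exp (lam * t) * (lam * 1)) * (x - c)) * u t x
          + (f x * Real.exp (lam * t) * (x - c)) * deriv (fun s => u s x) t) t := by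
      have hexp : HasDerivAt (fun s : ℝ => Real.exp (lam * s))
          (Real.exp (lam * t) * (lam * 1)) t := ((hasDerivAt_id t).const_mul lam).exp
      exact ((hexp.const_mul (f x)).mul_const (x - c)).mul hdt
    have hsum : HasDerivAt (fun y => A (u t y) * deriv (fun z => u t z) y + h y * u t y)
        ((deriv A (u t x) * deriv (fun z => u t z) x) * deriv (fun z => u t z) x
          + A (u t x) * deriv (deriv (fun z => u t z)) x
          + (f x * (2*μ - x) * u t x + h x * deriv (fun z => u t z) x)) x :=
      (hAg.mul hg'').add (hhd.mul hg')
    have hEy : HasDerivAt (fun y : ℝ => Real.exp (lam * t) * (y - c))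
        (Real.exp (lam * t) * 1) x := ((hasDerivAt_id x).sub_const c).const_mul _
    have hG : HasDerivAt (fun y =>
        -(Real.exp (lam * t) * (y - c)
            * (A (u t y) * deriv (fun z => u t z) y + h y * u t y))
          + Real.exp (lam * t) * FA (u t y))
        (-(Real.exp (lam * t) * 1
            * (A (u t x) * deriv (fun z => u t z) x + h x * u t x)
          + Real.exp (lam * t) * (x - c)
            * ((deriv A (u t x) * deriv (fun z => u t z) x) * deriv (fun z => u t z) x
              + A (u t x) * deriv (deriv (fun z => u t z)) x
              + (f x * (2*μ - x) * u t x + h x * deriv (fun z => u t z) x)))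
          + Real.exp (lam * t) * (A (u t x) * deriv (fun z => u t z) x)) x :=
      (hEy.mul hsum).neg.add (hFAg.const_mul _)
    rw [hFt.deriv, hG.deriv]
    linear_combination Real.exp (lam * t) * (x - c) * hpde'
      + Real.exp (lam * t) * u t x * hkey
  constructor
  · exact main 1 (2*μ + 1) (by rw [hhx]; ring)
  · have := main (-1) (2*μ - 1) (by rw [hhx]; ring)
    simpa [sub_neg_eq_add] using this
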